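/- For the 2×2 matrix A* = [[(1−V)², V(1−V)], [0, 1−V]] with V ∈ [0,1], the eigenvalues of (A*)ᵀA* are λ±(V) = (1−V)²·{1 + V² − V(1 ± √((1−V)² + 1))}, and the spectral norm satisfies ‖(A*)ᵀA*‖ = λ₋(V) ≤ (1−V)²(1 + V² + V). -/

import Mathlib

set_option maxHeartbeats 1000000


open Polynomial Matrix

/-- For `A* = [[(1−V)², V(1−V)], [0, 1−V]]` with `V ∈ [0,1]`, the eigenvalues of
`(A*)ᵀA*` are `λ±(V) = (1−V)²·(1 + V² − V(1 ± √((1−V)²+1)))` (so the characteristic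
polynomial factors as `(X − λ₊)(X − λ₋)`), the spectral norm of `(A*)ᵀA*` equals the
larger eigenvalue `λ₋(V)`, and `λ₋(V) ≤ (1−V)²(1 + V² + V)`. -/
theorem spectral_norm_of_recursion_matrix (V : ℝ) (hV : V ∈ Set.Icc (0 : ℝ) 1)
    (A : Matrix (Fin 2) (Fin 2) ℝ)
    (hA : A = !![(1 - V) ^ 2, V * (1 - V); 0, 1 - V])
    (lamPlus lamMinus : ℝ)
    (hPlus : lamPlus = (1 - V) ^ 2 * (1 + V ^ 2 - V * (1 + Real.sqrt ((1 - V) ^ 2 + 1))))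
    (hMinus : lamMinus = (1 - V) ^ 2 * (1 + V ^ 2 - V * (1 - Real.sqrt ((1 - V) ^ 2 + 1)))) :
    (Aᵀ * A).charpoly = (X - C lamPlus) * (X - C lamMinus) ∧
      ‖Matrix.toEuclideanCLM (𝕜 := ℝ) (Aᵀ * A)‖ = lamMinus ∧
      lamMinus ≤ (1 - V) ^ 2 * (1 + V ^ 2 + V) := by
  obtain ⟨hV0, hV1⟩ := hV
  set r : ℝ := Real.sqrt ((1 - V) ^ 2 + 1) with hr
  clear_value r
  have hr2 : r ^ 2 = (1 - V) ^ 2 + 1 := by rw [hr]; exact Real.sq_sqrt (by positivity)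
  have hr0 : 0 ≤ r := by rw [hr]; exact Real.sqrt_nonneg _
  have hr1 : 1 ≤ r := by nlinarith [sq_nonneg (r - 1), sq_nonneg (1 - V)]
  have hrle2 : r ≤ 2 := by nlinarith [sq_nonneg (r - 2)]
  -- the explicit matrix
  have hAT : Aᵀ = !![(1 - V) ^ 2, 0; V * (1 - V), 1 - V] := by
    subst hA
    ext i j
    fin_cases i <;> fin_cases j <;> simp
  have hM : Aᵀ * A = !![(1 - V) ^ 4, V * (1 - V) ^ 3; V * (1 - V) ^ 3,
      (V ^ 2 + 1) * (1 - V) ^ 2] := by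
    rw [hAT, hA, Matrix.mul_fin_two]
    ext i j
    fin_cases i <;> fin_cases j <;> simp <;> ring
  -- basic facts about the eigenvalues
  have hlm0 : 0 ≤ lamMinus := by
    rw [hMinus]
    have h2 : 0 ≤ 1 + V ^ 2 - V * (1 - r) := by nlinarith [mul_nonneg hV0 (sub_nonneg.2 hr1)]
    exact mul_nonneg (sq_nonneg _) h2
  have keyfac : (1 + V ^ 2 - V * (1 + r)) * (1 + V ^ 2 - V * (1 - r)) = (1 - V) ^ 2 := by
    linear_combination (-(V ^ 2)) * hr2
  have pos2 : 0 < 1 + V ^ 2 - V * (1 - r) := by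
    nlinarith [mul_nonneg hV0 hr0, sq_nonneg (2 * V - 1)]
  have hfac1 : 0 ≤ 1 + V ^ 2 - V * (1 + r) := by
    nlinarith [keyfac, pos2, sq_nonneg (1 - V)]
  have hlp0 : 0 ≤ lamPlus := by
    rw [hPlus]; exact mul_nonneg (sq_nonneg _) hfac1
  have hpm : lamPlus ≤ lamMinus := by
    rw [hPlus, hMinus]
    nlinarith [mul_nonneg (mul_nonneg (sq_nonneg (1 - V)) hV0) hr0]
  -- sum and product of eigenvalues
  have hsum : (1 - V) ^ 4 + (V ^ 2 + 1) * (1 - V) ^ 2 = lamPlus + lamMinus := by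
    rw [hPlus, hMinus]; ring
  have hprod : (1 - V) ^ 4 * ((V ^ 2 + 1) * (1 - V) ^ 2)
      - V * (1 - V) ^ 3 * (V * (1 - V) ^ 3) = lamPlus * lamMinus := by
    rw [hPlus, hMinus]
    linear_combination (V ^ 2 - 4 * V ^ 3 + 6 * V ^ 4 - 4 * V ^ 5 + V ^ 6) * hr2
  refine ⟨?_, ?_, ?_⟩
  · -- charpoly
    rw [hM, Matrix.charpoly, Matrix.det_fin_two]
    rw [charmatrix_apply_eq, charmatrix_apply_eq,
      charmatrix_apply_ne _ _ _ (by decide : (0 : Fin 2) ≠ 1),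
      charmatrix_apply_ne _ _ _ (by decide : (1 : Fin 2) ≠ 0)]
    have h1 : C ((1 - V) ^ 4) + C ((V ^ 2 + 1) * (1 - V) ^ 2) = C lamPlus + C lamMinus := by
      rw [← map_add, ← map_add, hsum]
    have h2 : C ((1 - V) ^ 4) * C ((V ^ 2 + 1) * (1 - V) ^ 2)
        - C (V * (1 - V) ^ 3) * C (V * (1 - V) ^ 3) = C lamPlus * C lamMinus := by
      have h2' := congrArg (C : ℝ →+* ℝ[X]) hprod
      simpa only [map_sub, _root_.map_mul] using h2'
    have e00 : (!![(1 - V) ^ 4, V * (1 - V) ^ 3; V * (1 - V) ^ 3,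
        (V ^ 2 + 1) * (1 - V) ^ 2] : Matrix (Fin 2) (Fin 2) ℝ) 0 0 = (1 - V) ^ 4 := rfl
    have e01 : (!![(1 - V) ^ 4, V * (1 - V) ^ 3; V * (1 - V) ^ 3,
        (V ^ 2 + 1) * (1 - V) ^ 2] : Matrix (Fin 2) (Fin 2) ℝ) 0 1 = V * (1 - V) ^ 3 := rfl
    have e10 : (!![(1 - V) ^ 4, V * (1 - V) ^ 3; V * (1 - V) ^ 3,
        (V ^ 2 + 1) * (1 - V) ^ 2] : Matrix (Fin 2) (Fin 2) ℝ) 1 0 = V * (1 - V) ^ 3 := rfl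
    have e11 : (!![(1 - V) ^ 4, V * (1 - V) ^ 3; V * (1 - V) ^ 3,
        (V ^ 2 + 1) * (1 - V) ^ 2] : Matrix (Fin 2) (Fin 2) ℝ) 1 1 = (V ^ 2 + 1) * (1 - V) ^ 2 := rfl
    rw [e00, e01, e10, e11]
    linear_combination (-X) * h1 + h2
  · -- spectral norm
    rw [hM]
    set N : Matrix (Fin 2) (Fin 2) ℝ := !![(1 - V) ^ 4, V * (1 - V) ^ 3; V * (1 - V) ^ 3,
      (V ^ 2 + 1) * (1 - V) ^ 2] with hN
    clear_value N
    refine le_antisymm ?_ ?_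
    · refine ContinuousLinearMap.opNorm_le_bound _ hlm0 fun x => ?_
      set y : Fin 2 → ℝ := WithLp.equiv 2 (Fin 2 → ℝ) x with hy
      clear_value y
      have hx : x = (WithLp.equiv 2 (Fin 2 → ℝ)).symm y := by
        rw [hy]; exact ((WithLp.equiv 2 _).symm_apply_apply x).symm
      rw [hx, show Matrix.toEuclideanCLM (𝕜 := ℝ) N ((WithLp.equiv 2 (Fin 2 → ℝ)).symm y)
          = (WithLp.equiv 2 (Fin 2 → ℝ)).symm (N *ᵥ y) from rfl]
      have hmv : N *ᵥ y = ![(1 - V) ^ 4 * y 0 + V * (1 - V) ^ 3 * y 1,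
          V * (1 - V) ^ 3 * y 0 + (V ^ 2 + 1) * (1 - V) ^ 2 * y 1] := by
        funext i
        fin_cases i <;> simp [hN, Matrix.mulVec, dotProduct, Fin.sum_univ_two]
      rw [hmv]
      have hnorm1 : ‖(WithLp.equiv 2 (Fin 2 → ℝ)).symm ![(1 - V) ^ 4 * y 0 + V * (1 - V) ^ 3 * y 1,
          V * (1 - V) ^ 3 * y 0 + (V ^ 2 + 1) * (1 - V) ^ 2 * y 1]‖
          = Real.sqrt (((1 - V) ^ 4 * y 0 + V * (1 - V) ^ 3 * y 1) ^ 2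
            + (V * (1 - V) ^ 3 * y 0 + (V ^ 2 + 1) * (1 - V) ^ 2 * y 1) ^ 2) := by
        rw [EuclideanSpace.norm_eq]
        simp [Fin.sum_univ_two, WithLp.equiv_symm_apply, PiLp.toLp_apply, sq_abs]
      have hnorm2 : ‖(WithLp.equiv 2 (Fin 2 → ℝ)).symm y‖ = Real.sqrt (y 0 ^ 2 + y 1 ^ 2) := by
        rw [EuclideanSpace.norm_eq]
        simp [Fin.sum_univ_two, WithLp.equiv_symm_apply, PiLp.toLp_apply, sq_abs]
      rw [hnorm1, hnorm2]
      have hkey : ((1 - V) ^ 4 * y 0 + V * (1 - V) ^ 3 * y 1) ^ 2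
          + (V * (1 - V) ^ 3 * y 0 + (V ^ 2 + 1) * (1 - V) ^ 2 * y 1) ^ 2
          ≤ lamMinus ^ 2 * (y 0 ^ 2 + y 1 ^ 2) := by
        have hq : 0 ≤ (lamMinus ^ 2 - lamPlus ^ 2) * ((1 + r) * y 0 - (1 - V) * y 1) ^ 2 :=
          mul_nonneg (by nlinarith) (sq_nonneg _)
        have hiden : 2 * r * (1 + r) * (lamMinus ^ 2 * (y 0 ^ 2 + y 1 ^ 2)
            - ((1 - V) ^ 4 * y 0 + V * (1 - V) ^ 3 * y 1) ^ 2
            - (V * (1 - V) ^ 3 * y 0 + (V ^ 2 + 1) * (1 - V) ^ 2 * y 1) ^ 2)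
            = (lamMinus ^ 2 - lamPlus ^ 2) * ((1 + r) * y 0 - (1 - V) * y 1) ^ 2 := by
          rw [hPlus, hMinus]
          linear_combination ((2 * V ^ 2 * r ^ 2 - 8 * V ^ 3 * r ^ 2 + 12 * V ^ 4 * r ^ 2
            - 8 * V ^ 5 * r ^ 2 + 2 * V ^ 6 * r ^ 2) * (y 0 ^ 2 + y 1 ^ 2)
            + (2 * V ^ 2 * r - 8 * V ^ 3 * r + 12 * V ^ 4 * r - 8 * V ^ 5 * r
              + 2 * V ^ 6 * r) * y 0 ^ 2
            + (4 * V * r - 18 * V ^ 2 * r + 36 * V ^ 3 * r - 44 * V ^ 4 * r + 36 * V ^ 5 * r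
              - 18 * V ^ 6 * r + 4 * V ^ 7 * r) * y 1 ^ 2) * hr2
        nlinarith [hq, hiden, mul_pos (by linarith : (0:ℝ) < 2 * r) (by linarith : (0:ℝ) < 1 + r)]
      calc Real.sqrt (((1 - V) ^ 4 * y 0 + V * (1 - V) ^ 3 * y 1) ^ 2
            + (V * (1 - V) ^ 3 * y 0 + (V ^ 2 + 1) * (1 - V) ^ 2 * y 1) ^ 2)
          ≤ Real.sqrt (lamMinus ^ 2 * (y 0 ^ 2 + y 1 ^ 2)) := Real.sqrt_le_sqrt hkey
        _ = lamMinus * Real.sqrt (y 0 ^ 2 + y 1 ^ 2) := by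
            rw [Real.sqrt_mul (by positivity), Real.sqrt_sq hlm0]
    · -- lower bound via the eigenvector (1-V, 1+r)
      set v : EuclideanSpace ℝ (Fin 2) := (WithLp.equiv 2 (Fin 2 → ℝ)).symm ![1 - V, 1 + r]
        with hv
      have hvec : N *ᵥ ![1 - V, 1 + r] = lamMinus • ![1 - V, 1 + r] := by
        funext i
        fin_cases i <;>
          simp [hN, Matrix.mulVec, dotProduct, Fin.sum_univ_two, hMinus]
        · ring
        · linear_combination (-(V * (1 - V) ^ 2)) * hr2
      have hMv : Matrix.toEuclideanCLM (𝕜 := ℝ) N v = lamMinus • v := by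
        rw [hv, show Matrix.toEuclideanCLM (𝕜 := ℝ) N ((WithLp.equiv 2 (Fin 2 → ℝ)).symm ![1 - V, 1 + r])
          = (WithLp.equiv 2 (Fin 2 → ℝ)).symm (N *ᵥ ![1 - V, 1 + r]) from rfl, hvec]; rfl
      have hvpos : 0 < ‖v‖ := by
        rw [norm_pos_iff]
        intro h
        have h1 : WithLp.equiv 2 (Fin 2 → ℝ) v 1 = 0 := by rw [h]; simp
        rw [hv] at h1
        simp [WithLp.equiv_symm_apply, PiLp.toLp_apply] at h1
        linarith
      have h1 : lamMinus * ‖v‖ ≤ ‖Matrix.toEuclideanCLM (𝕜 := ℝ) N‖ * ‖v‖ := by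
        calc lamMinus * ‖v‖ = ‖lamMinus • v‖ := by
              rw [norm_smul, Real.norm_eq_abs, abs_of_nonneg hlm0]
          _ = ‖Matrix.toEuclideanCLM (𝕜 := ℝ) N v‖ := by rw [hMv]
          _ ≤ ‖Matrix.toEuclideanCLM (𝕜 := ℝ) N‖ * ‖v‖ :=
              ContinuousLinearMap.le_opNorm _ _
      exact le_of_mul_le_mul_right h1 hvpos
  · -- the final bound
    rw [hMinus]
    nlinarith [mul_nonneg (mul_nonneg (sq_nonneg (1 - V)) hV0) (sub_nonneg.2 hrle2)]
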